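/- For every real number x > 0, the trigamma function satisfies ∑_{k=0}^{∞} 1/(x + k)² < 1/x + 1/(2x²) + 1/(6x³). -/
import Mathlib

noncomputable def fAux (y : ℝ) : ℝ := 1 / y + 1 / (2 * y ^ 2) + 1 / (6 * y ^ 3)

lemma fAux_nonneg {y : ℝ} (hy : 0 < y) : 0 ≤ fAux y := by
  unfold fAux; positivity

lemma fAux_key {y : ℝ} (hy : 0 < y) :
    fAux y - fAux (y + 1) - 1 / y ^ 2 = 1 / (6 * y ^ 3 * (y + 1) ^ 3) := by
  have h1 : y ≠ 0 := ne_of_gt hy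
  have h2 : y + 1 ≠ 0 := by positivity
  unfold fAux
  field_simp
  ring

lemma term_le {y : ℝ} (hy : 0 < y) : 1 / y ^ 2 ≤ fAux y - fAux (y + 1) := by
  have := fAux_key hy
  nlinarith [one_div_pos.mpr (by positivity : (0:ℝ) < 6 * y ^ 3 * (y + 1) ^ 3)]

lemma partial_le {y : ℝ} (hy : 0 < y) (n : ℕ) :
    ∑ i ∈ Finset.range n, 1 / (y + (i : ℝ)) ^ 2 ≤ fAux y := by
  have htel : ∑ i ∈ Finset.range n, (fAux (y + i) - fAux (y + i + 1)) =
      fAux y - fAux (y + n) := by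
    have := Finset.sum_range_sub' (fun i : ℕ => fAux (y + i)) n
    simpa [add_assoc] using this
  have hle : ∑ i ∈ Finset.range n, 1 / (y + (i : ℝ)) ^ 2 ≤
      ∑ i ∈ Finset.range n, (fAux (y + i) - fAux (y + i + 1)) := by
    apply Finset.sum_le_sum
    intro i _
    have hyi : 0 < y + (i : ℝ) := by positivity
    simpa using term_le hyi
  have hnn : 0 ≤ fAux (y + n) := fAux_nonneg (by positivity)
  linarith [hle, htel.le, htel.ge]

lemma summable_aux {y : ℝ} (hy : 0 < y) :
    Summable (fun k : ℕ => 1 / (y + (k : ℝ)) ^ 2) :=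
  summable_of_sum_range_le (fun n => by positivity) (partial_le hy)

lemma tsum_le {y : ℝ} (hy : 0 < y) :
    ∑' k : ℕ, 1 / (y + (k : ℝ)) ^ 2 ≤ fAux y :=
  Real.tsum_le_of_sum_range_le (fun n => by positivity) (partial_le hy)

theorem stmt_4 (x : ℝ) (hx : 0 < x) :
    ∑' k : ℕ, 1 / (x + (k : ℝ)) ^ 2 < 1 / x + 1 / (2 * x ^ 2) + 1 / (6 * x ^ 3) := by
  have hsum := summable_aux hx
  have hsplit : ∑' k : ℕ, 1 / (x + (k : ℝ)) ^ 2 =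
      1 / (x + (0:ℕ)) ^ 2 + ∑' k : ℕ, 1 / (x + ((k + 1 : ℕ) : ℝ)) ^ 2 :=
    Summable.tsum_eq_zero_add hsum
  have hshift : (fun k : ℕ => 1 / (x + ((k + 1 : ℕ) : ℝ)) ^ 2) =
      (fun k : ℕ => 1 / ((x + 1) + (k : ℝ)) ^ 2) := by
    funext k; push_cast; ring_nf
  have htail : ∑' k : ℕ, 1 / (x + ((k + 1 : ℕ) : ℝ)) ^ 2 ≤ fAux (x + 1) := by
    rw [hshift]; exact tsum_le (by positivity)
  have hkey := fAux_key hx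
  have hpos : (0:ℝ) < 1 / (6 * x ^ 3 * (x + 1) ^ 3) := by positivity
  have : ∑' k : ℕ, 1 / (x + (k : ℝ)) ^ 2 < fAux x := by
    rw [hsplit]
    have h0 : 1 / (x + ((0:ℕ):ℝ)) ^ 2 = 1 / x ^ 2 := by norm_num
    rw [h0]
    linarith
  simpa [fAux] using this
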